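/- For every natural number j ≥ 2, the recurrence t_j = (2(2j−3)/(π² j)) t_{j−1} − (1/(π² j(j−1))) t_{j−2} holds. -/

import Mathlib

open Real

/-- The summand `a_{j,k} = (-π²/4)^k / (2j+2k)! · C(j+k, j)`. -/
noncomputable def a (j k : ℕ) : ℝ :=
  (-(π ^ 2) / 4) ^ k / (Nat.factorial (2 * j + 2 * k)) * (Nat.choose (j + k) j)

/-- `t_j = Σ_{k=0}^∞ a_{j,k}`. -/
noncomputable def t (j : ℕ) : ℝ := ∑' k : ℕ, a j k

lemma choose_le_two_pow' (n r : ℕ) (h : r ≤ n) : Nat.choose n r ≤ 2 ^ n := by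
  rw [← Nat.sum_range_choose]
  exact Finset.single_le_sum (fun i _ => Nat.zero_le _)
    (Finset.mem_range.mpr (Nat.lt_succ_of_le h))

lemma summable_a (j : ℕ) : Summable (a j) := by
  have hb : Summable (fun k : ℕ => (2:ℝ) ^ j * ((π ^ 2 / 2) ^ k / k.factorial)) :=
    (Real.summable_pow_div_factorial (π ^ 2 / 2)).mul_left _
  refine Summable.of_abs (hb.of_nonneg_of_le (fun k => abs_nonneg _) (fun k => ?_))
  have hx : |(-(π ^ 2) / 4 : ℝ)| = π ^ 2 / 4 := by
    rw [abs_div, abs_neg, abs_of_nonneg (by positivity : (0:ℝ) ≤ π ^ 2)]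
    norm_num
  have h1 : |a j k| = (π ^ 2 / 4) ^ k / (Nat.factorial (2 * j + 2 * k))
      * (Nat.choose (j + k) j) := by
    rw [a, abs_mul, abs_div, abs_pow, hx, Nat.abs_cast, Nat.abs_cast]
  rw [h1]
  have hC : ((Nat.choose (j + k) j : ℝ)) ≤ 2 ^ (j + k) := by
    exact_mod_cast choose_le_two_pow' (j + k) j (Nat.le_add_right _ _)
  have hF : ((k.factorial : ℝ)) ≤ (Nat.factorial (2 * j + 2 * k)) := by
    exact_mod_cast Nat.factorial_le (by omega)
  have key : (π ^ 2 / 4) ^ k / (Nat.factorial (2 * j + 2 * k)) * (Nat.choose (j + k) j)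
      ≤ (π ^ 2 / 4) ^ k / k.factorial * 2 ^ (j + k) := by
    gcongr
  refine key.trans (le_of_eq ?_)
  have h4 : (4:ℝ) ^ k = 2 ^ k * 2 ^ k := by
    rw [show (4:ℝ) = 2 * 2 by norm_num, mul_pow]
  rw [pow_add, div_pow, div_pow, h4]
  field_simp

lemma nat_id (m k : ℕ) :
    (2*m+2*k+4)*(2*m+2*k+3) * Nat.choose (m+k+1) m
      = 2*(2*m+1)*(m+1) * Nat.choose (m+k+2) (m+1)
        + 4*(m+2)*(m+1) * Nat.choose (m+k+2) (m+2) := by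
  have h2 := Nat.add_one_mul_choose_eq (m+k+1) m
  have h3 := Nat.add_one_mul_choose_eq (m+k+1) (m+1)
  have h4 := Nat.choose_succ_right_eq (m+k+1) m
  have h4' : Nat.choose (m+k+1) (m+1) * (m+1) = Nat.choose (m+k+1) m * (k+1) := by
    rw [h4]; congr 1; omega
  zify at h2 h3 h4' ⊢
  nlinarith [h2, h3, h4']

lemma key (m k : ℕ) :
    a m (k+1) - 2*(2*(m:ℝ)+1)*((m:ℝ)+1) * a (m+1) (k+1)
      = -(π^2) * ((m:ℝ)+2) * ((m:ℝ)+1) * a (m+2) k := by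
  have hnat := nat_id m k
  have hc : ((2*m+2*k+4)*(2*m+2*k+3) * Nat.choose (m+k+1) m : ℝ)
      = 2*(2*(m:ℝ)+1)*((m:ℝ)+1) * Nat.choose (m+k+2) (m+1)
        + 4*((m:ℝ)+2)*((m:ℝ)+1) * Nat.choose (m+k+2) (m+2) := by
    exact_mod_cast congrArg (Nat.cast : ℕ → ℝ) hnat
  simp only [a]
  have e1 : 2 * m + 2 * (k+1) = 2*m+2*k+2 := by ring
  have e2 : 2 * (m+1) + 2 * (k+1) = 2*m+2*k+4 := by ring
  have e3 : 2 * (m+2) + 2 * k = 2*m+2*k+4 := by ring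
  have e4 : m + (k+1) = m+k+1 := by ring
  have e5 : m + 1 + (k+1) = m+k+2 := by ring
  have e6 : m + 2 + k = m+k+2 := by ring
  rw [e1, e2, e3, e4, e5, e6]
  have hF : (Nat.factorial (2*m+2*k+4) : ℝ)
      = (2*m+2*k+4) * ((2*m+2*k+3) * (Nat.factorial (2*m+2*k+2))) := by
    rw [show 2*m+2*k+4 = (2*m+2*k+3) + 1 from rfl, Nat.factorial_succ,
        show 2*m+2*k+3 = (2*m+2*k+2) + 1 from rfl, Nat.factorial_succ]
    push_cast; ring
  have hπ : (π : ℝ) ≠ 0 := Real.pi_ne_zero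
  have hf1 : (Nat.factorial (2*m+2*k+2) : ℝ) ≠ 0 := by
    exact_mod_cast (Nat.factorial_pos _).ne'
  rw [hF, pow_succ]
  have hN3 : (2*(m:ℝ)+2*(k:ℝ)+3) ≠ 0 := by positivity
  have hN4 : (2*(m:ℝ)+2*(k:ℝ)+4) ≠ 0 := by positivity
  field_simp
  linear_combination (-1:ℝ) * hc

/-- The recurrence `t_j = (2(2j−3)/(π² j)) t_{j−1} − (1/(π² j(j−1))) t_{j−2}` for `j ≥ 2`. -/
theorem t_recurrence (j : ℕ) (hj : 2 ≤ j) :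
    t j = 2 * (2 * (j : ℝ) - 3) / (π ^ 2 * j) * t (j - 1)
      - 1 / (π ^ 2 * j * ((j : ℝ) - 1)) * t (j - 2) := by
  obtain ⟨m, rfl⟩ : ∃ m, j = m + 2 := ⟨j - 2, by omega⟩
  set C1 : ℝ := 2*(2*(m:ℝ)+1)*((m:ℝ)+1) with hC1
  have S0 := summable_a m
  have S1 := summable_a (m+1)
  have S2 := summable_a (m+2)
  have Sd : Summable (fun k => a m k - C1 * a (m+1) k) := S0.sub (S1.mul_left C1)
  have hd0 : a m 0 - C1 * a (m+1) 0 = 0 := by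
    simp only [a, Nat.mul_zero, Nat.add_zero, pow_zero, Nat.choose_self, Nat.cast_one, mul_one]
    have : (Nat.factorial (2*(m+1)) : ℝ) = (2*m+2) * ((2*m+1) * (Nat.factorial (2*m))) := by
      rw [show 2*(m+1) = (2*m+1) + 1 from by ring, Nat.factorial_succ,
          show 2*m+1 = (2*m) + 1 from rfl, Nat.factorial_succ]
      push_cast; ring
    rw [this, hC1]
    have h0 : (Nat.factorial (2*m) : ℝ) ≠ 0 := by exact_mod_cast (Nat.factorial_pos _).ne'
    field_simp
    ring
  have hmain : t m - C1 * t (m+1) = -(π^2) * ((m:ℝ)+2) * ((m:ℝ)+1) * t (m+2) := by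
    have h1 : t m - C1 * t (m+1) = ∑' k, (a m k - C1 * a (m+1) k) := by
      rw [t, t, ← tsum_mul_left, ← Summable.tsum_sub S0 (S1.mul_left C1)]
    rw [h1, Summable.tsum_eq_zero_add Sd, hd0, zero_add]
    have h2 : ∀ k : ℕ, a m (k+1) - C1 * a (m+1) (k+1)
        = -(π^2) * ((m:ℝ)+2) * ((m:ℝ)+1) * a (m+2) k := fun k => key m k
    simp only [h2]
    rw [tsum_mul_left, t]
  have hπ : (π : ℝ) ≠ 0 := Real.pi_ne_zero
  have hm2 : ((m:ℝ)+2) ≠ 0 := by positivity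
  have hm1 : ((m:ℝ)+1) ≠ 0 := by positivity
  have hnat1 : (m + 2) - 1 = m + 1 := by omega
  have hnat2 : (m + 2) - 2 = m := by omega
  rw [hnat1, hnat2]
  push_cast
  rw [show ((m:ℝ)+2-1) = (m:ℝ)+1 by ring]
  rw [hC1] at hmain
  field_simp
  linear_combination (1:ℝ) * hmain
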